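/- bounds(D) completeness is preserved by deriving through interval injective views: if a propagator p over ℤ is bounds(D) complete for a constraint c (i.e., for every domain d' with nonempty finite variable domains, ⟦p(d')⟧ ⊆ ⟦conv(c ∩ ⟦d'⟧)⟧), and the view φ is interval injective, then the derived propagator φ̂(p) is bounds(D) complete for φ⁻(c): for every domain d with nonempty finite variable domains, ⟦φ̂(p)(d)⟧ ⊆ ⟦conv(φ_Asn ⁻¹' c ∩ ⟦d⟧)⟧. -/
import Mathlib


namespace Stmt7

variable {Var : Type*}

/-- The assignment set of a domain. -/
def asn {Val : Type*} (d : Var → Set Val) : Set (Var → Val) := {a | ∀ x, a x ∈ d x}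

/-- A view lifted to assignments. -/
def lift (φ : Var → ℤ → ℤ) (a : Var → ℤ) : Var → ℤ := fun x => φ x (a x)

/-- A view applied to a domain (pointwise image). -/
def img (φ : Var → ℤ → ℤ) (d : Var → Set ℤ) : Var → Set ℤ := fun x => φ x '' d x

/-- The inverse of a view applied to a domain (pointwise preimage). -/
def pre (φ : Var → ℤ → ℤ) (d : Var → Set ℤ) : Var → Set ℤ := fun x => φ x ⁻¹' d x

/-- The derived propagator `φ̂(p) = φ⁻ ∘ p ∘ φ`. -/
def derived (φ : Var → ℤ → ℤ) (p : (Var → Set ℤ) → Var → Set ℤ)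
    (d : Var → Set ℤ) : Var → Set ℤ := pre φ (p (img φ d))

/-- The strongest convex domain containing a constraint: for a finite nonempty constraint `c`,
`conv c x = Set.Icc (min over a ∈ c of a x) (max over a ∈ c of a x)`, and `conv ∅` is the
empty domain.  (A value lies between the min and the max of `{a x | a ∈ c}` iff it is above
some `a x` and below some `a' x`.) -/
def conv (c : Set (Var → ℤ)) : Var → Set ℤ :=
  fun x => {v | (∃ a ∈ c, a x ≤ v) ∧ (∃ a ∈ c, v ≤ a x)}

/-- A view is interval injective iff `φ_Asn ⁻¹' ⟦conv(c)⟧ = ⟦conv(φ_Asn ⁻¹' c)⟧` for every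
finite `φ`-constraint `c`. -/
def IntervalInjective (φ : Var → ℤ → ℤ) : Prop :=
  ∀ c : Set (Var → ℤ), c.Finite → (∀ a ∈ c, a ∈ Set.range (lift φ)) →
    lift φ ⁻¹' asn (conv c) = asn (conv (lift φ ⁻¹' c))

/-- A view is interval bijective iff it is interval injective and additionally
`φ_Asn '' ⟦conv(⟦d⟧)⟧ = ⟦conv(φ_Asn '' ⟦d⟧)⟧` for every domain `d` with nonempty finite
variable domains. -/
def IntervalBijective (φ : Var → ℤ → ℤ) : Prop :=
  IntervalInjective φ ∧
  ∀ d : Var → Set ℤ, (∀ x, (d x).Nonempty) → (∀ x, (d x).Finite) →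
    lift φ '' asn (conv (asn d)) = asn (conv (lift φ '' asn d))

/-- bounds(D) completeness is preserved by deriving through interval injective views: if a
propagator `p` over ℤ is bounds(D) complete for a finite constraint `c` and the view `φ` is
interval injective, then the derived propagator `φ̂(p)` is bounds(D) complete for `φ⁻(c)`. -/
theorem derived_boundsD_complete (φ : Var → ℤ → ℤ)
    (hφ : ∀ x, Function.Injective (φ x))
    (p : (Var → Set ℤ) → Var → Set ℤ)
    (hcontr : ∀ d x, p d x ⊆ d x)
    (hmono : ∀ d' d : Var → Set ℤ, (∀ x, d' x ⊆ d x) → ∀ x, p d' x ⊆ p d x)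
    (c : Set (Var → ℤ)) (hcfin : c.Finite)
    (hinj : IntervalInjective φ)
    (hcomp : ∀ d' : Var → Set ℤ, (∀ x, (d' x).Nonempty) → (∀ x, (d' x).Finite) →
      asn (p d') ⊆ asn (conv (c ∩ asn d'))) :
    ∀ d : Var → Set ℤ, (∀ x, (d x).Nonempty) → (∀ x, (d x).Finite) →
      asn (derived φ p d) ⊆ asn (conv (lift φ ⁻¹' c ∩ asn d)) := by
  intro d hne hfin a ha
  -- lift φ a is in p (img φ d)
  have hmem : lift φ a ∈ asn (p (img φ d)) := fun x => ha x
  have hne' : ∀ x, (img φ d x).Nonempty := fun x => (hne x).image _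
  have hfin' : ∀ x, (img φ d x).Finite := fun x => (hfin x).image _
  have h1 : lift φ a ∈ asn (conv (c ∩ asn (img φ d))) :=
    hcomp (img φ d) hne' hfin' hmem
  have hasn : asn (img φ d) = lift φ '' asn d := by
    ext b
    constructor
    · intro hb
      choose g hg1 hg2 using fun x => hb x
      exact ⟨g, hg1, funext fun x => hg2 x⟩
    · rintro ⟨b', hb', rfl⟩ x
      exact ⟨b' x, hb' x, rfl⟩
  rw [hasn] at h1
  have hfin2 : (c ∩ (lift φ '' asn d)).Finite := hcfin.inter_of_left _
  have hrange : ∀ b ∈ c ∩ (lift φ '' asn d), b ∈ Set.range (lift φ) := by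
    rintro b ⟨-, b', -, rfl⟩; exact ⟨b', rfl⟩
  have h2 : a ∈ asn (conv (lift φ ⁻¹' (c ∩ lift φ '' asn d))) := by
    rw [← hinj _ hfin2 hrange]; exact h1
  have hliftinj : Function.Injective (lift φ) := fun a1 a2 h =>
    funext fun x => hφ x (congrFun h x)
  have hpre : lift φ ⁻¹' (c ∩ lift φ '' asn d) = lift φ ⁻¹' c ∩ asn d := by
    rw [Set.preimage_inter, Set.preimage_image_eq _ hliftinj]
  rwa [hpre] at h2

end Stmt7
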